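/- For the surface z = (x²+y²)^{(1+a)/2} with a ≠ 0, −1, at every point with x²+y² > 0 the Hessian of f(x,y) = (x²+y²)^{(1+a)/2} has eigenvalues whose ratio is a (or 1/a), i.e., H²/K = (a+1)²/(4a) where H = (f_xx+f_yy)/2 and K = f_xx f_yy − f_xy². -/

import Mathlib

/-- Partial derivative in the first variable. -/
noncomputable def pdx (f : ℝ → ℝ → ℝ) (x y : ℝ) : ℝ := deriv (fun t => f t y) x

/-- Partial derivative in the second variable. -/
noncomputable def pdy (f : ℝ → ℝ → ℝ) (x y : ℝ) : ℝ := deriv (fun s => f x s) y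

open Real Filter Topology

lemma hasDerivAt_base (p c x : ℝ) (h : 0 < x ^ 2 + c) :
    HasDerivAt (fun t : ℝ => (t ^ 2 + c) ^ p) (2 * x * p * (x ^ 2 + c) ^ (p - 1)) x := by
  have h1 : HasDerivAt (fun t : ℝ => t ^ 2 + c) (2 * x) x := by
    simpa using (hasDerivAt_pow 2 x).add_const c
  have h2 := h1.rpow_const (p := p) (Or.inl h.ne')
  convert h2 using 1

lemma ev_pos {x c : ℝ} (h : 0 < x ^ 2 + c) : ∀ᶠ t in 𝓝 x, 0 < t ^ 2 + c := by
  have hc : Continuous fun t : ℝ => t ^ 2 + c := by continuity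
  exact hc.continuousAt.eventually (eventually_gt_nhds h)

lemma hasDerivAt_fx (p c x : ℝ) (h : 0 < x ^ 2 + c) :
    HasDerivAt (fun t : ℝ => 2 * t * p * (t ^ 2 + c) ^ (p - 1))
      (2 * p * (x ^ 2 + c) ^ (p - 1) + 4 * p * (p - 1) * x ^ 2 * (x ^ 2 + c) ^ (p - 2)) x := by
  have h1 := hasDerivAt_base (p - 1) c x h
  have h2 : HasDerivAt (fun t : ℝ => 2 * t * p) (2 * p) x := by
    simpa using ((hasDerivAt_id x).const_mul 2).mul_const p
  have h3 := h2.mul h1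
  have hq : p - 1 - 1 = p - 2 := by ring
  rw [hq] at h3
  exact h3.congr_deriv (by ring)

lemma hasDerivAt_fxy (p c x b : ℝ) (h : 0 < b ^ 2 + c) :
    HasDerivAt (fun s : ℝ => 2 * x * p * (s ^ 2 + c) ^ (p - 1))
      (4 * p * (p - 1) * x * b * (b ^ 2 + c) ^ (p - 2)) b := by
  have h1 := (hasDerivAt_base (p - 1) c b h).const_mul (2 * x * p)
  have hq : p - 1 - 1 = p - 2 := by ring
  rw [hq] at h1
  exact h1.congr_deriv (by ring)

lemma algebra_key (a u r x2 y2 p xyterm : ℝ) (ha : a ≠ 0) (ha1 : a + 1 ≠ 0)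
    (hu : u ≠ 0) (hr : r ≠ 0) (hsum : x2 + y2 = r) (hp : p = (1 + a) / 2)
    (hxy : xyterm ^ 2 = (4 * p * (p - 1) * u) ^ 2 * (x2 * y2)) :
    ((2 * p * (u * r) + 4 * p * (p - 1) * x2 * u +
        (2 * p * (u * r) + 4 * p * (p - 1) * y2 * u)) / 2) ^ 2 /
      ((2 * p * (u * r) + 4 * p * (p - 1) * x2 * u) *
          (2 * p * (u * r) + 4 * p * (p - 1) * y2 * u) - xyterm ^ 2) =
    (a + 1) ^ 2 / (4 * a) := by
  rw [hxy]
  have h4a : (4 : ℝ) * a ≠ 0 := mul_ne_zero (by norm_num) ha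
  have hD : (2 * p * (u * r) + 4 * p * (p - 1) * x2 * u) *
        (2 * p * (u * r) + 4 * p * (p - 1) * y2 * u) -
        (4 * p * (p - 1) * u) ^ 2 * (x2 * y2) = a * (a + 1) ^ 2 * u ^ 2 * r ^ 2 := by
    rw [hp, ← hsum]; ring
  rw [hD]
  have hDne : a * (a + 1) ^ 2 * u ^ 2 * r ^ 2 ≠ 0 :=
    mul_ne_zero (mul_ne_zero (mul_ne_zero ha (pow_ne_zero _ ha1)) (pow_ne_zero _ hu))
      (pow_ne_zero _ hr)
  rw [div_eq_div_iff hDne h4a]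
  rw [hp, ← hsum]; ring

/-- For `f(x,y) = (x²+y²)^((1+a)/2)` with `a ≠ 0, -1`, at every point with
`x²+y² > 0` we have `H²/K = (a+1)²/(4a)`. -/
theorem stmt3 (a : ℝ) (ha : a ≠ 0) (ha' : a ≠ -1)
    (f : ℝ → ℝ → ℝ) (hf : ∀ x y, f x y = (x ^ 2 + y ^ 2) ^ ((1 + a) / 2)) :
    ∀ x y : ℝ, 0 < x ^ 2 + y ^ 2 →
      ((pdx (pdx f) x y + pdy (pdy f) x y) / 2) ^ 2 /
          (pdx (pdx f) x y * pdy (pdy f) x y - (pdy (pdx f) x y) ^ 2) =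
        (a + 1) ^ 2 / (4 * a) := by
  have hf' : f = fun x y => (x ^ 2 + y ^ 2) ^ ((1 + a) / 2) := by
    funext x y; exact hf x y
  subst hf'
  intro x y h
  set p : ℝ := (1 + a) / 2 with hp
  set r : ℝ := x ^ 2 + y ^ 2 with hr
  have hpdx : ∀ t s : ℝ, 0 < t ^ 2 + s ^ 2 →
      pdx (fun x y => (x ^ 2 + y ^ 2) ^ p) t s = 2 * t * p * (t ^ 2 + s ^ 2) ^ (p - 1) := by
    intro t s hts
    exact (hasDerivAt_base p (s ^ 2) t hts).deriv
  have hpdy : ∀ t s : ℝ, 0 < t ^ 2 + s ^ 2 →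
      pdy (fun x y => (x ^ 2 + y ^ 2) ^ p) t s = 2 * s * p * (t ^ 2 + s ^ 2) ^ (p - 1) := by
    intro t s hts
    have h0 : 0 < s ^ 2 + t ^ 2 := by linarith
    have hd := (hasDerivAt_base p (t ^ 2) s h0).deriv
    unfold pdy
    rw [show (fun s' : ℝ => (t ^ 2 + s' ^ 2) ^ p) = fun s' : ℝ => (s' ^ 2 + t ^ 2) ^ p from by
      funext u; rw [add_comm]]
    rw [hd, add_comm (s ^ 2)]
  have hxx : pdx (pdx fun x y => (x ^ 2 + y ^ 2) ^ p) x y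
      = 2 * p * r ^ (p - 1) + 4 * p * (p - 1) * x ^ 2 * r ^ (p - 2) := by
    show deriv (fun t => pdx (fun x y => (x ^ 2 + y ^ 2) ^ p) t y) x = _
    have heq : (fun t => pdx (fun x y => (x ^ 2 + y ^ 2) ^ p) t y)
        =ᶠ[𝓝 x] fun t => 2 * t * p * (t ^ 2 + y ^ 2) ^ (p - 1) :=
      (ev_pos h).mono fun t ht => hpdx t y ht
    rw [heq.deriv_eq]
    exact (hasDerivAt_fx p (y ^ 2) x h).deriv
  have hyy : pdy (pdy fun x y => (x ^ 2 + y ^ 2) ^ p) x y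
      = 2 * p * r ^ (p - 1) + 4 * p * (p - 1) * y ^ 2 * r ^ (p - 2) := by
    show deriv (fun s => pdy (fun x y => (x ^ 2 + y ^ 2) ^ p) x s) y = _
    have h0 : 0 < y ^ 2 + x ^ 2 := by linarith
    have heq : (fun s => pdy (fun x y => (x ^ 2 + y ^ 2) ^ p) x s)
        =ᶠ[𝓝 y] fun s => 2 * s * p * (s ^ 2 + x ^ 2) ^ (p - 1) :=
      (ev_pos h0).mono fun s hs => by
        show pdy (fun x y => (x ^ 2 + y ^ 2) ^ p) x s = 2 * s * p * (s ^ 2 + x ^ 2) ^ (p - 1)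
        rw [hpdy x s (by linarith), add_comm (x ^ 2)]
    rw [heq.deriv_eq, (hasDerivAt_fx p (x ^ 2) y h0).deriv, hr, add_comm (y ^ 2)]
  have hxy : pdy (pdx fun x y => (x ^ 2 + y ^ 2) ^ p) x y
      = 4 * p * (p - 1) * x * y * r ^ (p - 2) := by
    show deriv (fun s => pdx (fun x y => (x ^ 2 + y ^ 2) ^ p) x s) y = _
    have h0 : 0 < y ^ 2 + x ^ 2 := by linarith
    have heq : (fun s => pdx (fun x y => (x ^ 2 + y ^ 2) ^ p) x s)
        =ᶠ[𝓝 y] fun s => 2 * x * p * (s ^ 2 + x ^ 2) ^ (p - 1) :=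
      (ev_pos h0).mono fun s hs => by
        show pdx (fun x y => (x ^ 2 + y ^ 2) ^ p) x s = 2 * x * p * (s ^ 2 + x ^ 2) ^ (p - 1)
        rw [hpdx x s (by linarith), add_comm (x ^ 2)]
    rw [heq.deriv_eq, (hasDerivAt_fxy p (x ^ 2) x y h0).deriv, hr, add_comm (y ^ 2)]
  have hr1 : r ^ (p - 1) = r ^ (p - 2) * r := by
    rw [show p - 1 = p - 2 + 1 by ring, Real.rpow_add h, Real.rpow_one]
  rw [hxx, hyy, hxy, hr1]
  have hu0 : r ^ (p - 2) ≠ 0 := (rpow_pos_of_pos h _).ne'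
  have ha1 : a + 1 ≠ 0 := by intro hh; exact ha' (by linarith)
  exact algebra_key a (r ^ (p - 2)) r (x ^ 2) (y ^ 2) p (4 * p * (p - 1) * x * y * r ^ (p - 2))
    ha ha1 hu0 h.ne' hr.symm hp (by ring)
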